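/- If 0 < c < c* (so that μ = 1/(1−cM) > 0), then E₂ = ((λ+μ)/(μλ)) · ∫₁^X f(z;μ,λ,−3/2) dz; and if c > c* (so that μ̃ = 1/(cM−1) > 0), then E₂ = ((λ+μ̃)/(λμ̃)) · exp(−2λ/μ̃) · ∫₁^X f(z;μ̃,λ,−3/2) dz. -/

import Mathlib

open MeasureTheory Real

/-- P.d.f. of the normal distribution with mean `m` and variance `s2`. -/
noncomputable def normalPdf (m s2 x : ℝ) : ℝ :=
  (Real.sqrt (2 * Real.pi * s2))⁻¹ * Real.exp (-(x - m) ^ 2 / (2 * s2))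

/-- The elementary component
`E_k = ∫₀^{c(t−v)/(u+cv)} (1+x)^{−k} φ_{cM(1+x), c²D²(1+x)/(u+cv)}(x) dx`. -/
noncomputable def elemComp (u c v t M D : ℝ) (k : ℕ) : ℝ :=
  ∫ x in (0:ℝ)..(c * (t - v) / (u + c * v)),
    ((1 + x) ^ k)⁻¹ *
      normalPdf (c * M * (1 + x)) (c ^ 2 * D ^ 2 * (1 + x) / (u + c * v)) x

/-- The exponential factor `E(z; μ, λ) = exp(−λ(z−μ)²/(2μ²z))`. -/
noncomputable def gigE (z μ lam : ℝ) : ℝ :=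
  Real.exp (-(lam * (z - μ) ^ 2) / (2 * μ ^ 2 * z))

/-- Generalized inverse Gaussian density with `p = 1/2`. -/
noncomputable def gigPdfHalf (μ lam z : ℝ) : ℝ :=
  Real.sqrt lam / (μ * Real.sqrt (2 * Real.pi)) * z ^ (-(1:ℝ)/2) * gigE z μ lam

/-- Generalized inverse Gaussian density with `p = −1/2`. -/
noncomputable def gigPdfNegHalf (μ lam z : ℝ) : ℝ :=
  Real.sqrt lam / Real.sqrt (2 * Real.pi) * z ^ (-(3:ℝ)/2) * gigE z μ lam

/-- Generalized inverse Gaussian density with `p = −3/2`. -/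
noncomputable def gigPdfNeg3Half (μ lam z : ℝ) : ℝ :=
  lam ^ ((3:ℝ)/2) * μ / (Real.sqrt (2 * Real.pi) * (lam + μ)) * z ^ (-(5:ℝ)/2) * gigE z μ lam

/-- Generalized inverse Gaussian density with `p = −5/2`. -/
noncomputable def gigPdfNeg5Half (μ lam z : ℝ) : ℝ :=
  lam ^ ((5:ℝ)/2) * μ ^ 2 / (Real.sqrt (2 * Real.pi) * (lam ^ 2 + 3 * lam * μ + 3 * μ ^ 2))
    * z ^ (-(7:ℝ)/2) * gigE z μ lam

lemma prefactor_aux (lam μ z : ℝ) (hl : 0 < lam) (hμ : 0 < μ) (hz : 0 < z) :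
    ((z ^ 2 : ℝ))⁻¹ * (Real.sqrt (2 * Real.pi * (z / lam)))⁻¹
      = (lam + μ) / (μ * lam) *
        (lam ^ ((3:ℝ)/2) * μ / (Real.sqrt (2 * Real.pi) * (lam + μ)) * z ^ (-(5:ℝ)/2)) := by
  have h52 : z ^ (-(5:ℝ)/2) = (z ^ 2 * Real.sqrt z)⁻¹ := by
    rw [Real.sqrt_eq_rpow, show (-(5:ℝ)/2) = -(2 + 1/2) by norm_num, Real.rpow_neg hz.le,
      Real.rpow_add hz, Real.rpow_two]
  have h32 : lam ^ ((3:ℝ)/2) = lam * Real.sqrt lam := by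
    rw [Real.sqrt_eq_rpow, show ((3:ℝ)/2) = 1 + 1/2 by norm_num, Real.rpow_add hl, Real.rpow_one]
  have hs : Real.sqrt (2 * Real.pi * (z / lam))
      = Real.sqrt (2 * Real.pi) * (Real.sqrt z / Real.sqrt lam) := by
    rw [Real.sqrt_mul (by positivity), Real.sqrt_div hz.le]
  have h1 : Real.sqrt lam * Real.sqrt lam = lam := Real.mul_self_sqrt hl.le
  have h2 : Real.sqrt z * Real.sqrt z = z := Real.mul_self_sqrt hz.le
  have hsl : Real.sqrt lam ≠ 0 := by positivity
  have hsz : Real.sqrt z ≠ 0 := by positivity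
  have hsp : Real.sqrt (2 * Real.pi) ≠ 0 := by positivity
  rw [h52, h32, hs]
  field_simp

lemma expo1_aux (lam μ a x : ℝ) (hl : lam ≠ 0) (hμ : μ ≠ 0) (hμ1 : μ * (1 - a) = 1)
    (hz : (0:ℝ) < 1 + x) :
    -(x - a * (1 + x)) ^ 2 / (2 * ((1 + x) / lam))
      = -(lam * ((x + 1) - μ) ^ 2) / (2 * μ ^ 2 * (x + 1)) := by
  have h : μ * (x - a * (1 + x)) = (x + 1) - μ := by linear_combination (x + 1) * hμ1
  have h2 : μ ^ 2 * (x - a * (1 + x)) ^ 2 = ((x + 1) - μ) ^ 2 := by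
    linear_combination (μ * (x - a * (1 + x)) + ((x + 1) - μ)) * h
  have hz' : (1 : ℝ) + x ≠ 0 := hz.ne'
  have hμ2 : (2 : ℝ) * μ ^ 2 * (x + 1) ≠ 0 := by
    have h3 : μ ^ 2 > 0 := by positivity
    nlinarith
  have hz2 : x + 1 ≠ 0 := by linarith
  field_simp
  linear_combination (-(x + 1)) * h2

lemma expo2_aux (lam μ a x : ℝ) (hl : lam ≠ 0) (hμ : μ ≠ 0) (hμ1 : μ * (a - 1) = 1)
    (hz : (0:ℝ) < 1 + x) :
    -(x - a * (1 + x)) ^ 2 / (2 * ((1 + x) / lam)) =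
      -2 * lam / μ + -(lam * ((x + 1) - μ) ^ 2) / (2 * μ ^ 2 * (x + 1)) := by
  have h : μ * (x - a * (1 + x)) = -((x + 1) + μ) := by linear_combination (-(x + 1)) * hμ1
  have h2 : μ ^ 2 * (x - a * (1 + x)) ^ 2 = ((x + 1) - μ) ^ 2 + 4 * μ * (x + 1) := by
    linear_combination (μ * (x - a * (1 + x)) - ((x + 1) + μ)) * h
  have hz' : (1 : ℝ) + x ≠ 0 := hz.ne'
  have hμ2 : (2 : ℝ) * μ ^ 2 * (x + 1) ≠ 0 := by
    have h3 : μ ^ 2 > 0 := by positivity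
    nlinarith
  have hz2 : x + 1 ≠ 0 := by linarith
  field_simp
  linear_combination (-(x + 1)) * h2

lemma pt1_aux (lam μ a x : ℝ) (hl : 0 < lam) (hμ : 0 < μ) (hμ1 : μ * (1 - a) = 1)
    (hx : 0 ≤ x) :
    ((1 + x) ^ 2 : ℝ)⁻¹ * normalPdf (a * (1 + x)) ((1 + x) / lam) x
      = (lam + μ) / (μ * lam) * gigPdfNeg3Half μ lam (x + 1) := by
  have hz : (0:ℝ) < 1 + x := by linarith
  have hz' : (0:ℝ) < x + 1 := by linarith
  simp only [normalPdf, gigPdfNeg3Half, gigE]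
  rw [expo1_aux lam μ a x hl.ne' hμ.ne' hμ1 hz]
  have e2 := prefactor_aux lam μ (x + 1) hl hμ hz'
  rw [show (1 : ℝ) + x = x + 1 by ring] at *
  linear_combination Real.exp (-(lam * ((x + 1) - μ) ^ 2) / (2 * μ ^ 2 * (x + 1))) * e2

lemma pt2_aux (lam μ a x : ℝ) (hl : 0 < lam) (hμ : 0 < μ) (hμ1 : μ * (a - 1) = 1)
    (hx : 0 ≤ x) :
    ((1 + x) ^ 2 : ℝ)⁻¹ * normalPdf (a * (1 + x)) ((1 + x) / lam) x
      = (lam + μ) / (lam * μ) * Real.exp (-2 * lam / μ) * gigPdfNeg3Half μ lam (x + 1) := by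
  have hz : (0:ℝ) < 1 + x := by linarith
  have hz' : (0:ℝ) < x + 1 := by linarith
  simp only [normalPdf, gigPdfNeg3Half, gigE]
  rw [expo2_aux lam μ a x hl.ne' hμ.ne' hμ1 hz, Real.exp_add]
  have e2 := prefactor_aux lam μ (x + 1) hl hμ hz'
  rw [show (1 : ℝ) + x = x + 1 by ring] at *
  linear_combination (Real.exp (-2 * lam / μ) *
    Real.exp (-(lam * ((x + 1) - μ) ^ 2) / (2 * μ ^ 2 * (x + 1)))) * e2

/-- Theorem on `E₂` in terms of the generalized inverse Gaussian c.d.f. with `p = −3/2`. -/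
theorem elemComp_two_eq (u c v t M D : ℝ)
    (hu : 0 < u) (hc : 0 < c) (hv : 0 ≤ v) (ht : v < t) (hM : 0 < M) (hD : 0 < D) :
    (c < 1 / M →
      elemComp u c v t M D 2
        = (((u + c * v) / (c ^ 2 * D ^ 2)) + (1 / (1 - c * M)))
              / ((1 / (1 - c * M)) * ((u + c * v) / (c ^ 2 * D ^ 2))) *
            ∫ z in (1:ℝ)..(c * (t - v) / (u + c * v) + 1),
              gigPdfNeg3Half (1 / (1 - c * M)) ((u + c * v) / (c ^ 2 * D ^ 2)) z)
    ∧ (1 / M < c →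
      elemComp u c v t M D 2
        = (((u + c * v) / (c ^ 2 * D ^ 2)) + (1 / (c * M - 1)))
              / (((u + c * v) / (c ^ 2 * D ^ 2)) * (1 / (c * M - 1))) *
            Real.exp (-2 * ((u + c * v) / (c ^ 2 * D ^ 2)) / (1 / (c * M - 1))) *
            ∫ z in (1:ℝ)..(c * (t - v) / (u + c * v) + 1),
              gigPdfNeg3Half (1 / (c * M - 1)) ((u + c * v) / (c ^ 2 * D ^ 2)) z) := by
  have hden : 0 < u + c * v := by positivity
  set lam : ℝ := (u + c * v) / (c ^ 2 * D ^ 2) with hlamdef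
  have hlam : 0 < lam := by positivity
  set L : ℝ := c * (t - v) / (u + c * v) with hLdef
  have hL : 0 < L := by
    apply div_pos _ hden
    have : 0 < t - v := by linarith
    positivity
  have hvar : ∀ x : ℝ, c ^ 2 * D ^ 2 * (1 + x) / (u + c * v) = (1 + x) / lam := by
    intro x
    rw [hlamdef]
    field_simp
  have helem : elemComp u c v t M D 2
      = ∫ x in (0:ℝ)..L, ((1 + x) ^ 2 : ℝ)⁻¹ * normalPdf (c * M * (1 + x)) ((1 + x) / lam) x := by
    unfold elemComp
    simp only [hvar]
    rfl
  constructor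
  · intro hcM
    have hcM1 : c * M < 1 := (lt_div_iff₀ hM).mp hcM
    set μ : ℝ := 1 / (1 - c * M) with hμdef
    have hne : (0:ℝ) < 1 - c * M := by linarith
    have hμ : 0 < μ := by
      rw [hμdef]; positivity
    have hμ1 : μ * (1 - c * M) = 1 := by
      rw [hμdef]; field_simp
    have key : Set.EqOn
        (fun x : ℝ => ((1 + x) ^ 2 : ℝ)⁻¹ * normalPdf (c * M * (1 + x)) ((1 + x) / lam) x)
        (fun x : ℝ => (lam + μ) / (μ * lam) * gigPdfNeg3Half μ lam (x + 1))
        (Set.uIcc (0:ℝ) L) := by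
      intro x hx
      rw [Set.uIcc_of_le hL.le] at hx
      exact pt1_aux lam μ (c * M) x hlam hμ hμ1 hx.1
    rw [helem, intervalIntegral.integral_congr key, intervalIntegral.integral_const_mul,
      intervalIntegral.integral_comp_add_right (fun z => gigPdfNeg3Half μ lam z) 1, zero_add]
  · intro hcM
    have hcM1 : 1 < c * M := (div_lt_iff₀ hM).mp hcM
    set μ : ℝ := 1 / (c * M - 1) with hμdef
    have hμ : 0 < μ := by
      rw [hμdef]
      have : 0 < c * M - 1 := by linarith
      positivity
    have hμ1 : μ * (c * M - 1) = 1 := by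
      rw [hμdef]
      have : c * M - 1 ≠ 0 := by linarith
      field_simp
    have key : Set.EqOn
        (fun x : ℝ => ((1 + x) ^ 2 : ℝ)⁻¹ * normalPdf (c * M * (1 + x)) ((1 + x) / lam) x)
        (fun x : ℝ => (lam + μ) / (lam * μ) * Real.exp (-2 * lam / μ) * gigPdfNeg3Half μ lam (x + 1))
        (Set.uIcc (0:ℝ) L) := by
      intro x hx
      rw [Set.uIcc_of_le hL.le] at hx
      exact pt2_aux lam μ (c * M) x hlam hμ hμ1 hx.1
    rw [helem, intervalIntegral.integral_congr key, intervalIntegral.integral_const_mul,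
      intervalIntegral.integral_comp_add_right (fun z => gigPdfNeg3Half μ lam z) 1, zero_add]
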